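/- arXiv:2202.12725 — 2 statements merged into one kernel-verified Lean document; each statement's English description precedes it below -/
import Mathlib

section
/- Let U be a p x p orthogonal matrix with columns u_1,...,u_p, let R be a symmetric positive-definite p x p matrix, and set sigma_i^2 = u_i' R u_i (which is positive for each i). For d = (d_1,...,d_p) with all d_i > 0, define the shrinkage matrix Rhat_d = U diag(d_1,...,d_p) U'. Then tr(Rhat_d^{-1})^2 / ( p * tr(Rhat_d^{-1} R Rhat_d^{-1}) ) <= (1/p) * sum_{i=1}^p 1/sigma_i^2, with equality if and only if there exists a constant kappa > 0 such that d_i = kappa * sigma_i^2 for all i. In particular, among all shrinkage matrices Rhat_d with the eigenvectors of U, the signal-to-noise ratio proxy tr(Rhat_d^{-1})^2 / ( p * tr(Rhat_d^{-1} R Rhat_d^{-1}) ) is maximized exactly when d_i is proportional to sigma_i^2 = u_i' R u_i. -/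
open MeasureTheory ProbabilityTheory Matrix Filter
open scoped ENNReal NNReal Topology

private lemma quad_identity {p : ℕ} (σ d : Fin p → ℝ) (hσ : ∀ i, 0 < σ i)
    (hd : ∀ i, 0 < d i) (t : ℝ) :
    ∑ i, (t * σ i - d i) ^ 2 / (d i ^ 2 * σ i) =
      (∑ i, σ i / d i ^ 2) * t ^ 2 - 2 * (∑ i, 1 / d i) * t + ∑ i, 1 / σ i := by
  have expand : ∀ i : Fin p, (t * σ i - d i) ^ 2 / (d i ^ 2 * σ i) =
      σ i / d i ^ 2 * t ^ 2 - 2 * (1 / d i) * t + 1 / σ i := by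
    intro i
    have h1 : d i ≠ 0 := (hd i).ne'
    have h2 : σ i ≠ 0 := (hσ i).ne'
    field_simp
    ring
  rw [Finset.sum_congr rfl fun i _ => expand i]
  rw [Finset.sum_add_distrib, Finset.sum_sub_distrib, ← Finset.sum_mul, ← Finset.sum_mul,
    ← Finset.mul_sum]

private lemma scalar_cs {p : ℕ} (hp : 0 < p) (σ d : Fin p → ℝ) (hσ : ∀ i, 0 < σ i)
    (hd : ∀ i, 0 < d i) :
    (∑ i, 1 / d i) ^ 2 ≤ (∑ i, σ i / d i ^ 2) * (∑ i, 1 / σ i) ∧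
    ((∑ i, 1 / d i) ^ 2 = (∑ i, σ i / d i ^ 2) * (∑ i, 1 / σ i) ↔
      ∃ κ > (0 : ℝ), ∀ i, d i = κ * σ i) := by
  set A := ∑ i, σ i / d i ^ 2 with hA
  set B := ∑ i, 1 / d i with hB
  set C := ∑ i, 1 / σ i with hC
  have hApos : 0 < A := by
    apply Finset.sum_pos (fun i _ => by have := hσ i; have := hd i; positivity)
    exact Finset.univ_nonempty_iff.mpr ⟨⟨0, hp⟩⟩
  have key : ∀ t : ℝ, ∑ i, (t * σ i - d i) ^ 2 / (d i ^ 2 * σ i) = A * t ^ 2 - 2 * B * t + C :=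
    quad_identity σ d hσ hd
  have hnonneg : ∀ t : ℝ, 0 ≤ A * t ^ 2 - 2 * B * t + C := fun t => by
    rw [← key t]; exact Finset.sum_nonneg fun i _ => by have := hσ i; have := hd i; positivity
  have hineq : B ^ 2 ≤ A * C := by
    have h := hnonneg (B / A)
    have h' : A * (B / A) ^ 2 - 2 * B * (B / A) + C = C - B ^ 2 / A := by
      field_simp; ring
    rw [h'] at h
    have := (div_le_iff₀ hApos).mp (by linarith : B ^ 2 / A ≤ C)
    linarith
  refine ⟨hineq, ?_, ?_⟩
  · intro heq
    refine ⟨B / A, ?_, fun i => ?_⟩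
    · have hBpos : 0 < B := Finset.sum_pos (fun i _ => by have := hd i; positivity)
        (Finset.univ_nonempty_iff.mpr ⟨⟨0, hp⟩⟩)
      positivity
    have hzero : ∑ i, (B / A * σ i - d i) ^ 2 / (d i ^ 2 * σ i) = 0 := by
      rw [key]
      field_simp
      nlinarith [heq]
    have := (Finset.sum_eq_zero_iff_of_nonneg
      (fun i _ => by have := hσ i; have := hd i; positivity)).mp hzero i (Finset.mem_univ i)
    have hne : d i ^ 2 * σ i ≠ 0 := by have := hσ i; have := hd i; positivity
    have h2 : (B / A * σ i - d i) ^ 2 = 0 := by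
      field_simp at this
      have hz : B / A * σ i - d i = 0 := by
        have hA0 : A ≠ 0 := hApos.ne'
        field_simp
        rw [mul_zero, div_eq_zero_iff] at this
        rcases this with h | h
        · rw [mul_zero]; exact pow_eq_zero_iff (n := 2) (by norm_num) |>.mp h
        · exact absurd h (by have := hσ i; have := hd i; positivity)
      rw [hz]; ring
    have := pow_eq_zero_iff (n := 2) (by norm_num) |>.mp h2
    linarith
  · rintro ⟨κ, hκ, hdk⟩
    have hBk : B = κ⁻¹ * C := by
      rw [hB, hC, Finset.mul_sum]
      exact Finset.sum_congr rfl fun i _ => by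
        rw [hdk i]; field_simp
    have hAk : A = κ⁻¹ ^ 2 * C := by
      rw [hA, hC, Finset.mul_sum]
      refine Finset.sum_congr rfl fun i _ => ?_
      rw [hdk i]
      have := (hσ i).ne'
      field_simp
    rw [hBk, hAk]; ring

/-- for an orthogonal `U` with columns `u_i`, a symmetric positive-definite
`R`, `σ_i² = u_i' R u_i > 0`, and shrinkage matrices `R̂_d = U diag(d) U'` with `d_i > 0`,
the SNR proxy satisfies `tr(R̂_d⁻¹)² / (p tr(R̂_d⁻¹ R R̂_d⁻¹)) ≤ (1/p) ∑ 1/σ_i²`, with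
equality iff `d_i = κ σ_i²` for some `κ > 0`; i.e. the proxy is maximized exactly when the
shrunken eigenvalues are proportional to `σ_i² = u_i' R u_i`. -/
theorem shrinkage_snr_optimality
    {p : ℕ} (U R : Matrix (Fin p) (Fin p) ℝ) (hU : Uᵀ * U = 1) (hR : R.PosDef)
    (d : Fin p → ℝ) (hd : ∀ i, 0 < d i) :
    (∀ i, 0 < Uᵀ i ⬝ᵥ R.mulVec (Uᵀ i)) ∧
    ((U * Matrix.diagonal d * Uᵀ)⁻¹.trace ^ 2 /
        (p * ((U * Matrix.diagonal d * Uᵀ)⁻¹ * R * (U * Matrix.diagonal d * Uᵀ)⁻¹).trace) ≤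
      (1 / p) * ∑ i, 1 / (Uᵀ i ⬝ᵥ R.mulVec (Uᵀ i))) ∧
    ((U * Matrix.diagonal d * Uᵀ)⁻¹.trace ^ 2 /
        (p * ((U * Matrix.diagonal d * Uᵀ)⁻¹ * R * (U * Matrix.diagonal d * Uᵀ)⁻¹).trace) =
      (1 / p) * ∑ i, 1 / (Uᵀ i ⬝ᵥ R.mulVec (Uᵀ i)) ↔
        ∃ κ > (0 : ℝ), ∀ i, d i = κ * (Uᵀ i ⬝ᵥ R.mulVec (Uᵀ i))) := by
  -- positivity of σ i
  have hσ : ∀ i, 0 < Uᵀ i ⬝ᵥ R.mulVec (Uᵀ i) := by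
    intro i
    have hne : Uᵀ i ≠ 0 := by
      intro h
      have h1 : (Uᵀ * U) i i = (1 : Matrix (Fin p) (Fin p) ℝ) i i := by rw [hU]
      rw [Matrix.mul_apply, Matrix.one_apply_eq] at h1
      rw [Finset.sum_eq_zero (fun k _ => by
        rw [show Uᵀ i k = 0 from congrFun h k, zero_mul])] at h1
      exact one_ne_zero h1.symm
    have := hR.dotProduct_mulVec_pos hne
    simpa using this
  set σ : Fin p → ℝ := fun i => Uᵀ i ⬝ᵥ R.mulVec (Uᵀ i) with hσdef
  refine ⟨hσ, ?_⟩
  rcases Nat.eq_zero_or_pos p with hp | hp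
  · subst hp
    have hz : ∀ M : Matrix (Fin 0) (Fin 0) ℝ, M.trace = 0 := fun M => by
      simp [Matrix.trace]
    refine ⟨by simp [hz], ?_⟩
    simp only [hz, Finset.univ_eq_empty, Finset.sum_empty, Nat.cast_zero, mul_zero,
      div_zero, mul_zero, ne_eq]
    constructor
    · exact fun _ => ⟨1, one_pos, fun i => i.elim0⟩
    · intro _; trivial
  -- matrix algebra
  have hU' : U * Uᵀ = 1 := mul_eq_one_comm.mp hU
  set D' : Matrix (Fin p) (Fin p) ℝ := Matrix.diagonal (fun i => (d i)⁻¹) with hD'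
  have hDD' : Matrix.diagonal d * D' = 1 := by
    rw [hD', Matrix.diagonal_mul_diagonal]
    have h : (fun i => d i * (d i)⁻¹) = fun _ => (1 : ℝ) :=
      funext fun i => mul_inv_cancel₀ (hd i).ne'
    rw [h]
    exact Matrix.diagonal_one
  have hinv : (U * Matrix.diagonal d * Uᵀ)⁻¹ = U * D' * Uᵀ := by
    apply Matrix.inv_eq_right_inv
    calc U * Matrix.diagonal d * Uᵀ * (U * D' * Uᵀ)
        = U * Matrix.diagonal d * (Uᵀ * U) * D' * Uᵀ := by
          simp only [Matrix.mul_assoc]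
      _ = U * (Matrix.diagonal d * D') * Uᵀ := by rw [hU]; simp only [Matrix.mul_assoc,
          Matrix.one_mul]
      _ = 1 := by rw [hDD', Matrix.mul_one, hU']
  have htr1 : (U * Matrix.diagonal d * Uᵀ)⁻¹.trace = ∑ i, 1 / d i := by
    rw [hinv, Matrix.trace_mul_comm (U * D') Uᵀ, ← Matrix.mul_assoc, hU, Matrix.one_mul,
      hD', Matrix.trace_diagonal]
    simp [one_div]
  have hMdiag : ∀ i, (Uᵀ * R * U) i i = σ i := by
    intro i
    rw [hσdef]
    simp only [Matrix.mul_apply, dotProduct, Matrix.mulVec, Matrix.transpose_apply,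
      dotProduct, Finset.sum_mul, Finset.mul_sum]
    rw [Finset.sum_comm]
    exact Finset.sum_congr rfl fun j _ => Finset.sum_congr rfl fun k _ => by ring
  have htr2 : ((U * Matrix.diagonal d * Uᵀ)⁻¹ * R * (U * Matrix.diagonal d * Uᵀ)⁻¹).trace =
      ∑ i, σ i / d i ^ 2 := by
    rw [hinv]
    have : U * D' * Uᵀ * R * (U * D' * Uᵀ) = U * (D' * (Uᵀ * R * U) * D') * Uᵀ := by
      simp only [Matrix.mul_assoc]
    rw [this, Matrix.trace_mul_comm (U * (D' * (Uᵀ * R * U) * D')) Uᵀ, ← Matrix.mul_assoc,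
      hU, Matrix.one_mul, Matrix.trace]
    refine Finset.sum_congr rfl fun i _ => ?_
    rw [Matrix.diag_apply, Matrix.mul_apply]
    rw [Finset.sum_eq_single i (fun b _ hb => by
        rw [hD', Matrix.diagonal_apply_ne _ hb, mul_zero])
      (fun h => absurd (Finset.mem_univ i) h)]
    rw [Matrix.mul_apply]
    rw [Finset.sum_eq_single i (fun b _ hb => by
        rw [hD', Matrix.diagonal_apply_ne' _ hb, zero_mul])
      (fun h => absurd (Finset.mem_univ i) h)]
    rw [hD', Matrix.diagonal_apply_eq, hMdiag i]
    rw [div_eq_mul_inv, sq, mul_inv]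
    ring
  obtain ⟨hcs, hcseq⟩ := scalar_cs hp σ d hσ hd
  rw [htr1, htr2]
  have hppos : (0 : ℝ) < p := Nat.cast_pos.mpr hp
  have hApos : 0 < ∑ i, σ i / d i ^ 2 := by
    apply Finset.sum_pos (fun i _ => by have := hσ i; have := hd i; positivity)
    exact Finset.univ_nonempty_iff.mpr ⟨⟨0, hp⟩⟩
  have hden : 0 < (p : ℝ) * ∑ i, σ i / d i ^ 2 := by positivity
  constructor
  · rw [div_le_iff₀ hden]
    calc (∑ i, 1 / d i) ^ 2 ≤ (∑ i, σ i / d i ^ 2) * (∑ i, 1 / σ i) := hcs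
      _ = 1 / ↑p * (∑ i, 1 / σ i) * (↑p * ∑ i, σ i / d i ^ 2) := by
          field_simp
  · rw [div_eq_iff hden.ne']
    rw [show (1 : ℝ) / ↑p * (∑ i, 1 / σ i) * (↑p * ∑ i, σ i / d i ^ 2)
        = (∑ i, σ i / d i ^ 2) * (∑ i, 1 / σ i) by field_simp]
    exact hcseq
end

section
/- Let x_1,...,x_n be i.i.d. random vectors in R^p with x_j ~ N(mu, R) for a symmetric positive-definite p x p matrix R and n >= 2. Let xbar = (1/n) * sum_{j=1}^n x_j be the sample mean and let S = (1/(n-1)) * sum_{j=1}^n (x_j - xbar)(x_j - xbar)' be the sample covariance matrix. Then xbar and S are independent. -/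
open MeasureTheory ProbabilityTheory Matrix Filter
open scoped ENNReal NNReal Topology

/-- The standard Gaussian measure on `ℝ^p` (i.i.d. standard normal coordinates). -/
noncomputable def stdGaussian (p : ℕ) : Measure (Fin p → ℝ) :=
  Measure.pi fun _ => gaussianReal 0 1

/-- The positive semidefinite square root of a positive semidefinite matrix
(the definition Mathlib had in December 2024, since removed). -/
noncomputable def Matrix.PosSemidef.sqrt {n : Type*} [Fintype n] [DecidableEq n]
    {A : Matrix n n ℝ} (hA : A.PosSemidef) : Matrix n n ℝ :=
  (hA.1.eigenvectorUnitary : Matrix n n ℝ) * diagonal ((√·) ∘ hA.1.eigenvalues) *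
    (star hA.1.eigenvectorUnitary : Matrix n n ℝ)

/-- The multivariate Gaussian measure `N(μ, R)` on `ℝ^p`, for `R` positive semidefinite,
defined as the law of `μ + R^{1/2} w` with `w` standard Gaussian. -/
noncomputable def mvGaussian {p : ℕ} (μ : Fin p → ℝ) {R : Matrix (Fin p) (Fin p) ℝ}
    (hR : R.PosSemidef) : Measure (Fin p → ℝ) :=
  (stdGaussian p).map fun w => μ + hR.sqrt.mulVec w

section Aux
open Set


section Helpers
variable {α β γ δ : Type*} [MeasurableSpace α] [MeasurableSpace β] [MeasurableSpace γ]
  [MeasurableSpace δ]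

lemma indepFun_comp_of_map {μ : Measure α} {T : α → β} {f : β → γ} {g : β → δ}
    (hT : Measurable T) (hf : Measurable f) (hg : Measurable g)
    (h : IndepFun f g (μ.map T)) : IndepFun (f ∘ T) (g ∘ T) μ := by
  rw [indepFun_iff_measure_inter_preimage_eq_mul] at h ⊢
  intro s t hs ht
  have h2 := h s t hs ht
  rw [Measure.map_apply hT ((hf hs).inter (hg ht)), Measure.map_apply hT (hf hs),
    Measure.map_apply hT (hg ht), Set.preimage_inter] at h2
  simpa [Set.preimage_comp] using h2

lemma indepFun_map_of_comp {μ : Measure α} {T : α → β} {f : β → γ} {g : β → δ}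
    (hT : Measurable T) (hf : Measurable f) (hg : Measurable g)
    (h : IndepFun (f ∘ T) (g ∘ T) μ) : IndepFun f g (μ.map T) := by
  rw [indepFun_iff_measure_inter_preimage_eq_mul] at h ⊢
  intro s t hs ht
  have h2 := h s t hs ht
  rw [Measure.map_apply hT ((hf hs).inter (hg ht)), Measure.map_apply hT (hf hs),
    Measure.map_apply hT (hg ht), Set.preimage_inter]
  simpa [Set.preimage_comp] using h2

lemma indepFun_fst_snd' (μ : Measure α) (ν : Measure β) [IsProbabilityMeasure μ]
    [IsProbabilityMeasure ν] :
    IndepFun (Prod.fst : α × β → α) (Prod.snd : α × β → β) (μ.prod ν) := by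
  rw [indepFun_iff_measure_inter_preimage_eq_mul]
  intro s t hs ht
  have h1 : (Prod.fst : α × β → α) ⁻¹' s ∩ Prod.snd ⁻¹' t = s ×ˢ t := (Set.prod_eq s t).symm
  have h2 : (Prod.fst : α × β → α) ⁻¹' s = s ×ˢ (univ : Set β) := (Set.prod_univ).symm
  have h3 : (Prod.snd : α × β → β) ⁻¹' t = (univ : Set α) ×ˢ t := (Set.univ_prod).symm
  rw [h1, h2, h3, Measure.prod_prod, Measure.prod_prod, Measure.prod_prod]
  simp

lemma map_withDensity_equiv {μ : Measure α} (e : α ≃ᵐ β) {f : α → ℝ≥0∞} (hf : Measurable f) :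
    (μ.withDensity f).map e = (μ.map e).withDensity (f ∘ e.symm) := by
  ext s hs
  rw [Measure.map_apply e.measurable hs, withDensity_apply _ (e.measurable hs),
    withDensity_apply _ hs, setLIntegral_map hs (hf.comp e.symm.measurable) e.measurable]
  simp

end Helpers

lemma gaussPi_eq_withDensity (ι : Type*) [Fintype ι] :
    (Measure.pi fun _ : ι => gaussianReal 0 1) =
      (volume : Measure (ι → ℝ)).withDensity fun x => ∏ i, gaussianPDF 0 1 (x i) := by
  refine Measure.pi_eq fun s hs => ?_
  rw [withDensity_apply _ (MeasurableSet.univ_pi hs), ← lintegral_indicator (MeasurableSet.univ_pi hs)]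
  have h1 : ∀ x : ι → ℝ,
      Set.indicator (Set.univ.pi s) (fun x : ι → ℝ => ∏ i, gaussianPDF 0 1 (x i)) x
      = ∏ i, ENNReal.ofReal (Set.indicator (s i) (gaussianPDFReal 0 1) (x i)) := by
    intro x
    by_cases hx : x ∈ Set.univ.pi s
    · rw [Set.indicator_of_mem hx]
      refine Finset.prod_congr rfl fun i _ => ?_
      rw [Set.indicator_of_mem (hx i (Set.mem_univ i))]
      rfl
    · rw [Set.indicator_of_notMem hx]
      rw [Set.mem_univ_pi] at hx
      push_neg at hx
      obtain ⟨i, hi⟩ := hx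
      symm
      apply Finset.prod_eq_zero (Finset.mem_univ i)
      rw [Set.indicator_of_notMem hi]
      simp
  simp_rw [h1]
  have h2 : ∀ i : ι, Integrable (Set.indicator (s i) (gaussianPDFReal 0 1)) := by
    intro i
    exact (integrable_gaussianPDFReal 0 1).indicator (hs i)
  have hnn : ∀ (i : ι) (y : ℝ), 0 ≤ Set.indicator (s i) (gaussianPDFReal 0 1) y :=
    fun i y => Set.indicator_nonneg (fun z _ => gaussianPDFReal_nonneg 0 1 z) y
  have h3 : ∀ x : ι → ℝ, ∏ i, ENNReal.ofReal (Set.indicator (s i) (gaussianPDFReal 0 1) (x i))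
      = ENNReal.ofReal (∏ i, Set.indicator (s i) (gaussianPDFReal 0 1) (x i)) :=
    fun x => (ENNReal.ofReal_prod_of_nonneg (fun i _ => hnn i (x i))).symm
  simp_rw [h3]
  rw [MeasureTheory.volume_pi]
  rw [← MeasureTheory.ofReal_integral_eq_lintegral_ofReal (Integrable.fintype_prod h2)
    (Filter.Eventually.of_forall fun x => Finset.prod_nonneg fun i _ => hnn i (x i))]
  rw [MeasureTheory.integral_fintype_prod_eq_prod (fun i => Set.indicator (s i) (gaussianPDFReal 0 1))]
  rw [ENNReal.ofReal_prod_of_nonneg (fun i _ => integral_nonneg (hnn i))]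
  refine Finset.prod_congr rfl fun i _ => ?_
  rw [MeasureTheory.integral_indicator (hs i), ← gaussianReal_apply_eq_integral 0 one_ne_zero (s i)]

variable {ι : Type*} [Fintype ι] [DecidableEq ι]

lemma measurable_mulVec (N : Matrix ι ι ℝ) : Measurable (N.mulVec) := by
  have h : N.mulVec = ⇑(Matrix.toLin' N) := by funext v; rw [Matrix.toLin'_apply]
  rw [h]
  exact (Matrix.toLin' N).continuous_of_finiteDimensional.measurable

lemma sq_sum_mulVec {N : Matrix ι ι ℝ} (hN : Nᵀ * N = 1) (x : ι → ℝ) :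
    ∑ i, (N.mulVec x i) ^ 2 = ∑ i, (x i) ^ 2 := by
  have h1 : ∑ i, (N.mulVec x i) ^ 2 = (N.mulVec x) ⬝ᵥ (N.mulVec x) := by
    simp [dotProduct, sq]
  have h2 : ∑ i, (x i) ^ 2 = x ⬝ᵥ x := by simp [dotProduct, sq]
  rw [h1, h2, Matrix.dotProduct_mulVec, ← Matrix.mulVec_transpose, Matrix.mulVec_mulVec, hN,
    Matrix.one_mulVec]

lemma prod_gaussianPDF_eq {N : Matrix ι ι ℝ} (hN : Nᵀ * N = 1) (x : ι → ℝ) :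
    ∏ i, gaussianPDF 0 1 (N.mulVec x i) = ∏ i, gaussianPDF 0 1 (x i) := by
  have key : ∀ z : ι → ℝ, ∏ i, gaussianPDFReal 0 1 (z i)
      = (Real.sqrt (2 * Real.pi))⁻¹ ^ Fintype.card ι * Real.exp (-(∑ i, (z i) ^ 2) / 2) := by
    intro z
    simp only [gaussianPDFReal, NNReal.coe_one, mul_one, sub_zero]
    rw [Finset.prod_mul_distrib, Finset.prod_const, ← Real.exp_sum]
    congr 1
    simp only [neg_div, Finset.sum_div, Finset.sum_neg_distrib]
  simp only [gaussianPDF]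
  rw [← ENNReal.ofReal_prod_of_nonneg (fun i _ => gaussianPDFReal_nonneg 0 1 _),
    ← ENNReal.ofReal_prod_of_nonneg (fun i _ => gaussianPDFReal_nonneg 0 1 _),
    key, key, sq_sum_mulVec hN]

lemma gaussPi_map_orthogonal {M : Matrix ι ι ℝ} (hM : Mᵀ * M = 1) :
    (Measure.pi fun _ : ι => gaussianReal 0 1).map M.mulVec
      = Measure.pi fun _ : ι => gaussianReal 0 1 := by
  have hMM : M * Mᵀ = 1 := mul_eq_one_comm.mp hM
  have hdet : M.det = 1 ∨ M.det = -1 := by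
    have h := congrArg Matrix.det hM
    rw [Matrix.det_mul, Matrix.det_transpose, Matrix.det_one] at h
    exact mul_self_eq_one_iff.mp h
  have hdet0 : M.det ≠ 0 := by rcases hdet with h | h <;> rw [h] <;> norm_num
  have habs : |M.det⁻¹| = 1 := by rcases hdet with h | h <;> rw [h] <;> norm_num
  have hNT : (Mᵀ)ᵀ * Mᵀ = 1 := by rw [Matrix.transpose_transpose]; exact hMM
  let e : (ι → ℝ) ≃ᵐ (ι → ℝ) :=
    { toEquiv :=
        { toFun := M.mulVec
          invFun := Mᵀ.mulVec
          left_inv := fun x => by rw [Matrix.mulVec_mulVec, hM, Matrix.one_mulVec]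
          right_inv := fun x => by rw [Matrix.mulVec_mulVec, hMM, Matrix.one_mulVec] }
      measurable_toFun := measurable_mulVec M
      measurable_invFun := measurable_mulVec Mᵀ }
  have hD : Measurable (fun x : ι → ℝ => ∏ i, gaussianPDF 0 1 (x i)) :=
    Finset.measurable_prod _ fun i _ => (measurable_gaussianPDF 0 1).comp (measurable_pi_apply i)
  have hcoe : ⇑e = M.mulVec := rfl
  rw [gaussPi_eq_withDensity, ← hcoe, map_withDensity_equiv e hD]
  have hvol : (volume : Measure (ι → ℝ)).map ⇑e = volume := by
    have h2 : ⇑e = ⇑(Matrix.toLin' M) := by funext v; rw [Matrix.toLin'_apply]; rfl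
    rw [h2, Real.map_matrix_volume_pi_eq_smul_volume_pi hdet0, habs]
    simp
  rw [hvol]
  have hfun : ((fun x : ι → ℝ => ∏ i, gaussianPDF 0 1 (x i)) ∘ ⇑e.symm)
      = fun x : ι → ℝ => ∏ i, gaussianPDF 0 1 (x i) := by
    funext x
    have hsymm : e.symm x = Mᵀ.mulVec x := rfl
    simp only [Function.comp_apply, hsymm]
    exact prod_gaussianPDF_eq hNT x
  rw [hfun, ← gaussPi_eq_withDensity]

lemma measurePreserving_curry {ι κ : Type*} [Fintype ι] [Fintype κ] {α : Type*}
    [MeasurableSpace α] (m : Measure α) [IsProbabilityMeasure m] :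
    MeasurePreserving (fun (u : ι × κ → α) (j : ι) (i : κ) => u (j, i))
      (Measure.pi fun _ : ι × κ => m) (Measure.pi fun _ : ι => Measure.pi fun _ : κ => m) := by
  have hmeas : Measurable (fun (u : ι × κ → α) (j : ι) (i : κ) => u (j, i)) :=
    measurable_pi_lambda _ fun j => measurable_pi_lambda _ fun i => measurable_pi_apply _
  refine ⟨hmeas, ?_⟩
  symm
  refine Measure.pi_eq_generateFrom
    (fun _ => generateFrom_pi) (fun _ => isPiSystem_pi)
    (fun _ => ⟨fun _ => univ, fun _ => ⟨fun _ => univ, fun i _ => MeasurableSet.univ,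
      Set.pi_univ univ⟩, fun _ => by simp, by rw [Set.iUnion_const]⟩) ?_
  intro s hs
  choose t ht hts using hs
  have hts' : ∀ j, s j = Set.univ.pi (t j) := fun j => (hts j).symm
  have hpre : (fun (u : ι × κ → α) (j : ι) (i : κ) => u (j, i)) ⁻¹' Set.univ.pi s
      = Set.univ.pi (fun q : ι × κ => t q.1 q.2) := by
    ext u
    simp only [Set.mem_preimage, Set.mem_univ_pi, hts']
    constructor
    · intro h q
      exact h q.1 q.2
    · intro h j i
      exact h (j, i)
  rw [Measure.map_apply hmeas (MeasurableSet.univ_pi fun j => by rw [hts']; exact MeasurableSet.univ_pi fun i => ht j i (Set.mem_univ i)), hpre, Measure.pi_pi]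
  rw [← Finset.univ_product_univ, Finset.prod_product]
  refine Finset.prod_congr rfl fun j _ => ?_
  rw [hts', Measure.pi_pi]

lemma indepFun_restrict_pi {ι : Type*} [Fintype ι] {α : Type*} [MeasurableSpace α]
    (m : Measure α) [IsProbabilityMeasure m] (q : ι → Prop) [DecidablePred q] :
    IndepFun (fun (u : ι → α) (i : {i // q i}) => u i) (fun (u : ι → α) (i : {i // ¬ q i}) => u i)
      (Measure.pi fun _ : ι => m) := by
  have hmp := measurePreserving_piEquivPiSubtypeProd (fun _ : ι => m) q
  have h1 := indepFun_fst_snd' (Measure.pi fun _ : {i // q i} => m)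
    (Measure.pi fun _ : {i // ¬ q i} => m)
  rw [← hmp.map_eq] at h1
  exact indepFun_comp_of_map hmp.measurable measurable_fst measurable_snd h1

lemma map_tuple_eq_pi {Ω : Type*} [MeasureSpace Ω] [IsProbabilityMeasure (ℙ : Measure Ω)]
    {n : ℕ} {α : Type*} [MeasurableSpace α] (x : Fin n → Ω → α) (hmeas : ∀ j, Measurable (x j))
    (hindep : iIndepFun x ℙ) :
    Measure.map (fun ω j => x j ω) ℙ = Measure.pi fun j => Measure.map (x j) ℙ := by
  symm
  refine Measure.pi_eq fun s hs => ?_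
  rw [Measure.map_apply (measurable_pi_lambda _ hmeas) (MeasurableSet.univ_pi hs)]
  have hpre : (fun ω j => x j ω) ⁻¹' Set.univ.pi s = ⋂ j, x j ⁻¹' s j := by
    ext ω; simp [Set.mem_univ_pi]
  rw [hpre, hindep.meas_iInter (fun j => ⟨s j, hs j, rfl⟩)]
  exact Finset.prod_congr rfl fun j _ => (Measure.map_apply (hmeas j) (hs j)).symm

lemma exists_helmert {n : ℕ} [NeZero n] (hn : 2 ≤ n) :
    ∃ H : Matrix (Fin n) (Fin n) ℝ, H * Hᵀ = 1 ∧ ∀ k, H 0 k = (Real.sqrt n)⁻¹ := by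
  have hnpos : (0 : ℝ) < n := by
    have : 0 < n := lt_of_lt_of_le (by norm_num) hn
    exact_mod_cast this
  have hn0 : (n : ℝ) ≠ 0 := ne_of_gt hnpos
  set c : ℝ := (Real.sqrt n)⁻¹ with hc
  let u0 : EuclideanSpace ℝ (Fin n) := WithLp.toLp 2 (fun _ => c)
  have hnorm : ‖u0‖ = 1 := by
    rw [EuclideanSpace.norm_eq]
    have h2 : ∀ i : Fin n, ‖u0 i‖ ^ 2 = (n : ℝ)⁻¹ := by
      intro i
      show ‖c‖ ^ 2 = _
      rw [Real.norm_eq_abs, sq_abs, hc, inv_pow, Real.sq_sqrt hnpos.le]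
    have h1 : ∑ i : Fin n, ‖u0 i‖ ^ 2 = (n : ℝ) * (n : ℝ)⁻¹ := by
      rw [Finset.sum_congr rfl fun i _ => h2 i, Finset.sum_const, Finset.card_univ,
        Fintype.card_fin, nsmul_eq_mul]
    rw [h1, mul_inv_cancel₀ hn0, Real.sqrt_one]
  have horth : Orthonormal ℝ (({0} : Set (Fin n)).restrict fun _ : Fin n => u0) := by
    constructor
    · intro i; exact hnorm
    · intro i j hij
      exact absurd (Subtype.ext (by rw [i.2, j.2] : (i : Fin n) = j)) hij
  obtain ⟨b, hb⟩ := Orthonormal.exists_orthonormalBasis_extension_of_card_eq (𝕜 := ℝ)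
    (by simp [finrank_euclideanSpace_fin]) horth
  have hb0 : b 0 = u0 := hb 0 rfl
  refine ⟨Matrix.of fun j k => b j k, ?_, fun k => by
    show b 0 k = c
    rw [hb0]⟩
  ext j k
  rw [Matrix.mul_apply, Matrix.one_apply]
  have hinner := orthonormal_iff_ite.mp b.orthonormal j k
  rw [PiLp.inner_apply] at hinner
  simp only [RCLike.inner_apply, conj_trivial] at hinner
  simpa [Matrix.of_apply, Matrix.transpose_apply, mul_comm] using hinner

lemma helmert_row_sum {n : ℕ} [NeZero n] (hn : 2 ≤ n) {H : Matrix (Fin n) (Fin n) ℝ} (hH : H * Hᵀ = 1)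
    (h0 : ∀ k, H 0 k = (Real.sqrt n)⁻¹) (k : Fin n) :
    ∑ j, H k j = Real.sqrt n * (if k = 0 then 1 else 0) := by
  have hnpos : (0 : ℝ) < n := by
    have : 0 < n := lt_of_lt_of_le (by norm_num) hn
    exact_mod_cast this
  have hs : (0 : ℝ) < Real.sqrt n := Real.sqrt_pos.mpr hnpos
  have h1 := congrFun (congrFun hH k) 0
  rw [Matrix.mul_apply, Matrix.one_apply] at h1
  simp only [Matrix.transpose_apply, h0] at h1
  have h2 : (∑ j, H k j) * (Real.sqrt n)⁻¹ = if k = 0 then 1 else 0 := by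
    rw [Finset.sum_mul]
    exact h1
  calc ∑ j, H k j = ((∑ j, H k j) * (Real.sqrt n)⁻¹) * Real.sqrt n := by
        rw [mul_assoc, inv_mul_cancel₀ (ne_of_gt hs), mul_one]
    _ = Real.sqrt n * (if k = 0 then 1 else 0) := by rw [h2, mul_comm]

lemma kron_orth {n p : ℕ} {H : Matrix (Fin n) (Fin n) ℝ} (hH : H * Hᵀ = 1) :
    (Matrix.of fun (z w : Fin n × Fin p) => if z.2 = w.2 then H w.1 z.1 else 0)ᵀ *
      (Matrix.of fun (z w : Fin n × Fin p) => if z.2 = w.2 then H w.1 z.1 else 0) = 1 := by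
  ext ⟨k, l⟩ ⟨k', l'⟩
  rw [Matrix.mul_apply, Matrix.one_apply]
  simp only [Matrix.transpose_apply, Matrix.of_apply]
  rw [Fintype.sum_prod_type]
  by_cases hl : l = l'
  · subst hl
    have h1 : ∀ j : Fin n,
        (∑ i : Fin p, (if i = l then H k j else 0) * (if i = l then H k' j else 0))
          = H k j * H k' j := by
      intro j
      rw [Finset.sum_congr rfl (fun i _ => show
        (if i = l then H k j else 0) * (if i = l then H k' j else 0)
          = if i = l then H k j * H k' j else 0 by by_cases hi : i = l <;> simp [hi])]
      rw [Finset.sum_ite_eq' Finset.univ l (fun _ => H k j * H k' j)]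
      simp
    rw [Finset.sum_congr rfl fun j _ => h1 j]
    have h2 := congrFun (congrFun hH k) k'
    rw [Matrix.mul_apply, Matrix.one_apply] at h2
    simp only [Matrix.transpose_apply] at h2
    rw [h2]
    simp [Prod.ext_iff]
  · have h1 : ∀ j : Fin n,
        (∑ i : Fin p, (if i = l then H k j else 0) * (if i = l' then H k' j else 0)) = 0 := by
      intro j
      refine Finset.sum_eq_zero fun i _ => ?_
      by_cases hi : i = l
      · rw [if_neg (show ¬ i = l' by rw [hi]; exact hl), mul_zero]
      · rw [if_neg hi, zero_mul]
    rw [Finset.sum_congr rfl fun j _ => h1 j, Finset.sum_const, smul_zero]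
    have hne : ¬ ((k, l) = (k', l')) := by
      intro h
      exact hl (congrArg Prod.snd h)
    rw [if_neg hne]

lemma mulVec_kron {n p : ℕ} (H : Matrix (Fin n) (Fin n) ℝ) (u : Fin n × Fin p → ℝ)
    (j : Fin n) (i : Fin p) :
    (Matrix.of fun (z w : Fin n × Fin p) => if z.2 = w.2 then H w.1 z.1 else 0).mulVec u (j, i)
      = ∑ k, H k j * u (k, i) := by
  simp only [Matrix.mulVec, dotProduct, Matrix.of_apply]
  rw [Fintype.sum_prod_type]
  refine Finset.sum_congr rfl fun k _ => ?_
  rw [Finset.sum_congr rfl (fun l _ => show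
      (if i = l then H k j else 0) * u (k, l) = if i = l then H k j * u (k, l) else 0 by
    by_cases hi : i = l <;> simp [hi])]
  rw [Finset.sum_ite_eq Finset.univ i (fun l => H k j * u (k, l))]
  simp


lemma col_sum {n : ℕ} [NeZero n] (hn : 2 ≤ n) {H : Matrix (Fin n) (Fin n) ℝ}
    (hH : H * Hᵀ = 1) (h0 : ∀ k, H 0 k = (Real.sqrt n)⁻¹) (c : Fin n → ℝ) :
    ∑ j, ∑ k, H k j * c k = Real.sqrt n * c 0 := by
  rw [Finset.sum_comm]
  have h1 : ∀ k, ∑ j, H k j * c k = (Real.sqrt ↑n * if k = 0 then 1 else 0) * c k := by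
    intro k; rw [← Finset.sum_mul, helmert_row_sum hn hH h0 k]
  rw [Finset.sum_congr rfl fun k _ => h1 k]
  rw [Finset.sum_congr rfl (fun k _ => show
      (Real.sqrt ↑n * if k = 0 then 1 else 0) * c k
        = if k = 0 then Real.sqrt ↑n * c k else 0 by by_cases hk : k = 0 <;> simp [hk])]
  rw [Finset.sum_ite_eq' Finset.univ (0 : Fin n) (fun k => Real.sqrt ↑n * c k)]
  simp

lemma col_dev {n : ℕ} [NeZero n] {H : Matrix (Fin n) (Fin n) ℝ}
    (h0 : ∀ k, H 0 k = (Real.sqrt n)⁻¹) (c : Fin n → ℝ) (j : Fin n) :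
    (∑ k, H k j * c k) - (Real.sqrt n)⁻¹ * c 0
      = ∑ k, if h : k = 0 then 0 else H k j * c k := by
  have h1 : ∑ k, (if h : k = 0 then (0 : ℝ) else H k j * c k)
      = ∑ k, (H k j * c k - if k = 0 then H 0 j * c 0 else 0) := by
    refine Finset.sum_congr rfl fun k _ => ?_
    by_cases hk : k = 0
    · subst hk; simp
    · simp [hk]
  rw [h1, Finset.sum_sub_distrib, Finset.sum_ite_eq' Finset.univ (0 : Fin n)
    (fun _ => H 0 j * c 0)]
  simp [h0 j]
end Aux

/-- for an i.i.d. sample `x_1, …, x_n ~ N(μ, R)` with `n ≥ 2` and `R`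
symmetric positive definite, the sample mean `x̄ = (1/n) ∑ x_j` and the sample covariance
matrix `S = (1/(n-1)) ∑ (x_j - x̄)(x_j - x̄)'` (viewed entrywise) are independent. -/
theorem sample_mean_sample_covariance_independent
    {Ω : Type*} [MeasureSpace Ω] [IsProbabilityMeasure (ℙ : Measure Ω)]
    {p n : ℕ} (hn : 2 ≤ n) (μ : Fin p → ℝ) (R : Matrix (Fin p) (Fin p) ℝ) (hR : R.PosDef)
    (x : Fin n → Ω → Fin p → ℝ) (hmeas : ∀ j, Measurable (x j))
    (hindep : iIndepFun x ℙ)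
    (hgauss : ∀ j, Measure.map (x j) ℙ = mvGaussian μ hR.posSemidef) :
    IndepFun (fun ω => (n : ℝ)⁻¹ • ∑ j, x j ω)
      (fun ω (i k : Fin p) => ((n : ℝ) - 1)⁻¹ *
        ∑ j, (x j ω i - ((n : ℝ)⁻¹ • ∑ j', x j' ω) i) *
          (x j ω k - ((n : ℝ)⁻¹ • ∑ j', x j' ω) k)) ℙ := by
  haveI : NeZero n := ⟨by omega⟩
  have hnpos : (0 : ℝ) < n := by exact_mod_cast (by omega : 0 < n)
  have hn0 : (n : ℝ) ≠ 0 := ne_of_gt hnpos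
  have hns : Real.sqrt n ≠ 0 := ne_of_gt (Real.sqrt_pos.mpr hnpos)
  have hinv : (n : ℝ)⁻¹ * Real.sqrt n = (Real.sqrt n)⁻¹ := by
    field_simp
    exact Real.sq_sqrt hnpos.le
  obtain ⟨H, hH, h0⟩ := exists_helmert hn
  set Q := hR.posSemidef.sqrt with hQdef
  set M : Matrix (Fin n × Fin p) (Fin n × Fin p) ℝ :=
    Matrix.of fun z w => if z.2 = w.2 then H w.1 z.1 else 0 with hMdef
  have hMo : Mᵀ * M = 1 := kron_orth hH
  -- maps and measures
  set G : Measure ((Fin n × Fin p) → ℝ) := Measure.pi fun _ => gaussianReal 0 1 with hGdef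
  let E : ((Fin n × Fin p) → ℝ) → (Fin n → Fin p → ℝ) := fun u j i => u (j, i)
  let A : (Fin n → Fin p → ℝ) → (Fin n → Fin p → ℝ) := fun w j => μ + Q.mulVec (w j)
  let Ψ : ((Fin n × Fin p) → ℝ) → (Fin n → Fin p → ℝ) := fun u => A (E (M.mulVec u))
  let X : Ω → (Fin n → Fin p → ℝ) := fun ω j => x j ω
  let F : (Fin n → Fin p → ℝ) → (Fin p → ℝ) := fun y => (n : ℝ)⁻¹ • ∑ j, y j
  let S : (Fin n → Fin p → ℝ) → (Fin p → Fin p → ℝ) := fun y i k => ((n : ℝ) - 1)⁻¹ *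
      ∑ j, (y j i - ((n : ℝ)⁻¹ • ∑ j', y j') i) * (y j k - ((n : ℝ)⁻¹ • ∑ j', y j') k)
  -- measurability
  have hQm : Measurable (Q.mulVec) := measurable_mulVec Q
  have hMm : Measurable (M.mulVec) := measurable_mulVec M
  have hEm : Measurable E :=
    measurable_pi_lambda _ fun j => measurable_pi_lambda _ fun i => measurable_pi_apply _
  have hAm : Measurable A :=
    measurable_pi_lambda _ fun j => measurable_pi_lambda _ fun i =>
      ((measurable_pi_apply i).comp (hQm.comp (measurable_pi_apply j))).const_add (μ i)
  have hΨm : Measurable Ψ := hAm.comp (hEm.comp hMm)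
  have hXm : Measurable X := measurable_pi_lambda _ hmeas
  have hmean0 : Measurable fun y : Fin n → Fin p → ℝ => (n : ℝ)⁻¹ • ∑ j, y j :=
    (Finset.measurable_sum Finset.univ fun j _ => measurable_pi_apply j).const_smul ((n : ℝ)⁻¹)
  have hFm : Measurable F := hmean0
  have hSm : Measurable S := by
    refine measurable_pi_lambda _ fun i => measurable_pi_lambda _ fun k => ?_
    refine Measurable.const_mul (Finset.measurable_sum Finset.univ fun j _ => ?_) _
    exact (((measurable_pi_apply i).comp (measurable_pi_apply j)).sub
        ((measurable_pi_apply i).comp hmean0)).mul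
      (((measurable_pi_apply k).comp (measurable_pi_apply j)).sub
        ((measurable_pi_apply k).comp hmean0))
  -- distribution chain
  haveI : IsProbabilityMeasure (stdGaussian p) := by
    unfold _root_.stdGaussian
    infer_instance
  haveI : IsProbabilityMeasure (mvGaussian μ hR.posSemidef) := by
    have hφ : Measurable fun w : Fin p → ℝ => μ + hR.posSemidef.sqrt.mulVec w :=
      measurable_pi_lambda _ fun i =>
        ((measurable_pi_apply i).comp (measurable_mulVec _)).const_add (μ i)
    exact Measure.isProbabilityMeasure_map hφ.aemeasurable
  have hone : MeasurePreserving (fun v : Fin p → ℝ => μ + Q.mulVec v) (stdGaussian p)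
      (mvGaussian μ hR.posSemidef) :=
    ⟨measurable_pi_lambda _ fun i =>
      ((measurable_pi_apply i).comp hQm).const_add (μ i), rfl⟩
  have hAff : MeasurePreserving A (Measure.pi fun _ : Fin n => stdGaussian p)
      (Measure.pi fun _ : Fin n => mvGaussian μ hR.posSemidef) :=
    measurePreserving_pi _ _ (fun _ => hone)
  have hcurry : MeasurePreserving E G (Measure.pi fun _ : Fin n => stdGaussian p) :=
    measurePreserving_curry (gaussianReal 0 1)
  have hlaw : Measure.map X ℙ = Measure.map Ψ G := by
    have h3 : Measure.map Ψ G = Measure.map A (Measure.map E G) := by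
      conv_rhs => rw [hGdef, ← gaussPi_map_orthogonal hMo]
      rw [Measure.map_map hEm hMm, Measure.map_map hAm (hEm.comp hMm)]
      rfl
    rw [map_tuple_eq_pi x hmeas hindep]
    have h1 : (Measure.pi fun j : Fin n => Measure.map (x j) ℙ)
        = Measure.pi fun _ : Fin n => mvGaussian μ hR.posSemidef := by
      congr 1
      funext j
      exact hgauss j
    rw [h1, ← hAff.map_eq, ← hcurry.map_eq, h3]
  -- restricted coordinate functions
  let v₁ : ((Fin n × Fin p) → ℝ) → ({z : Fin n × Fin p // z.1 = 0} → ℝ) := fun u z => u z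
  let v₂ : ((Fin n × Fin p) → ℝ) → ({z : Fin n × Fin p // ¬ z.1 = 0} → ℝ) := fun u z => u z
  let f₁ : ({z : Fin n × Fin p // z.1 = 0} → ℝ) → (Fin p → ℝ) :=
    fun v => μ + Q.mulVec fun i => (Real.sqrt n)⁻¹ * v ⟨(0, i), rfl⟩
  let d : ({z : Fin n × Fin p // ¬ z.1 = 0} → ℝ) → Fin n → Fin p → ℝ :=
    fun v j l => ∑ m, if h : m = 0 then 0 else H m j * v ⟨(m, l), h⟩
  let f₂ : ({z : Fin n × Fin p // ¬ z.1 = 0} → ℝ) → (Fin p → Fin p → ℝ) :=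
    fun v i k => ((n : ℝ) - 1)⁻¹ * ∑ j, Q.mulVec (d v j) i * Q.mulVec (d v j) k
  -- key identities
  have hw' : ∀ (u : (Fin n × Fin p) → ℝ) (j : Fin n) (i : Fin p),
      ∑ z : Fin n × Fin p, M (j, i) z * u z = ∑ k, H k j * u (k, i) :=
    fun u j i => mulVec_kron H u j i
  have hmean : ∀ u, F (Ψ u) = f₁ (v₁ u) := by
    intro u
    funext i
    show ((n : ℝ)⁻¹ • ∑ j, Ψ u j) i = (μ + Q.mulVec fun i' => (Real.sqrt n)⁻¹ * u (0, i')) i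
    simp only [Ψ, A, E, Pi.smul_apply, Finset.sum_apply, Pi.add_apply, smul_eq_mul,
      Matrix.mulVec, dotProduct]
    simp only [hw']
    rw [Finset.sum_add_distrib, Finset.sum_const, Finset.card_univ, Fintype.card_fin,
      Finset.sum_comm]
    have h4 : ∀ l : Fin p, ∑ j, Q i l * ∑ k, H k j * u (k, l)
        = Q i l * (Real.sqrt n * u (0, l)) := by
      intro l
      rw [← Finset.mul_sum, col_sum hn hH h0 (fun k => u (k, l))]
    rw [Finset.sum_congr rfl fun l _ => h4 l, mul_add, nsmul_eq_mul, ← mul_assoc,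
      inv_mul_cancel₀ hn0, one_mul, Finset.mul_sum]
    congr 1
    refine Finset.sum_congr rfl fun l _ => ?_
    rw [← hinv]
    ring
  have hdev : ∀ (u : (Fin n × Fin p) → ℝ) (j : Fin n) (i : Fin p),
      Ψ u j i - ((n : ℝ)⁻¹ • ∑ j', Ψ u j') i = Q.mulVec (d (v₂ u) j) i := by
    intro u j i
    have hm := congrFun (hmean u) i
    show Ψ u j i - F (Ψ u) i = Q.mulVec (d (v₂ u) j) i
    rw [hm]
    simp only [Ψ, A, E, f₁, v₁, Pi.add_apply, Matrix.mulVec, dotProduct]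
    simp only [hw']
    rw [add_sub_add_left_eq_sub, ← Finset.sum_sub_distrib]
    refine Finset.sum_congr rfl fun l _ => ?_
    rw [← mul_sub]
    congr 1
    exact col_dev h0 (fun k => u (k, l)) j
  have hcov : ∀ u, S (Ψ u) = f₂ (v₂ u) := by
    intro u
    funext i k
    show ((n : ℝ) - 1)⁻¹ * ∑ j, (Ψ u j i - ((n : ℝ)⁻¹ • ∑ j', Ψ u j') i) *
        (Ψ u j k - ((n : ℝ)⁻¹ • ∑ j', Ψ u j') k)
      = ((n : ℝ) - 1)⁻¹ * ∑ j, Q.mulVec (d (v₂ u) j) i * Q.mulVec (d (v₂ u) j) k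
    congr 1
    refine Finset.sum_congr rfl fun j _ => ?_
    rw [hdev u j i, hdev u j k]
  -- measurability of block functions
  have hf₁m : Measurable f₁ := by
    have hg : Measurable fun (v : {z : Fin n × Fin p // z.1 = 0} → ℝ) (i : Fin p) =>
        (Real.sqrt n)⁻¹ * v ⟨(0, i), rfl⟩ :=
      measurable_pi_lambda _ fun i => (measurable_pi_apply _).const_mul _
    exact measurable_pi_lambda _ fun i =>
      ((measurable_pi_apply i).comp (hQm.comp hg)).const_add (μ i)
  have hdm : ∀ j, Measurable fun v => d v j := by
    intro j
    refine measurable_pi_lambda _ fun l => Finset.measurable_sum Finset.univ fun m _ => ?_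
    by_cases h : m = 0
    · simpa [h] using measurable_const
    · simp only [dif_neg h]
      exact (measurable_pi_apply _).const_mul _
  have hf₂m : Measurable f₂ := by
    refine measurable_pi_lambda _ fun i => measurable_pi_lambda _ fun k =>
      (Finset.measurable_sum Finset.univ fun j _ => ?_).const_mul _
    exact ((measurable_pi_apply i).comp (hQm.comp (hdm j))).mul
      ((measurable_pi_apply k).comp (hQm.comp (hdm j)))
  -- combine
  have hrestr := (indepFun_restrict_pi (gaussianReal 0 1)
    (fun z : Fin n × Fin p => z.1 = 0)).comp hf₁m hf₂m
  have hcomp : IndepFun (F ∘ Ψ) (S ∘ Ψ) G :=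
    hrestr.congr (Filter.Eventually.of_forall fun u => (hmean u).symm)
      (Filter.Eventually.of_forall fun u => (hcov u).symm)
  have h8 : IndepFun F S (Measure.map Ψ G) := indepFun_map_of_comp hΨm hFm hSm hcomp
  rw [← hlaw] at h8
  exact indepFun_comp_of_map hXm hFm hSm h8
end
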